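/- arXiv:2111.11194 — 2 statements merged into one kernel-verified Lean document; each statement's English description precedes it below -/
import Mathlib

section
/- Let D* = {z ∈ ℂ : 0 < |z| ≤ 1} be the punctured closed disk, and let φ : D* → D* be a proper continuous map such that φ⁻¹(∂D*) = ∂D* and φ restricted to ∂D* = {|z| = 1} is a homeomorphism onto ∂D*. Then φ is properly homotopic, relative to ∂D*, to a homeomorphism D* → D*. -/
def PuncturedDisk : Set ℂ := {z : ℂ | 0 < ‖z‖ ∧ ‖z‖ ≤ 1}

def PuncturedDiskBoundary : Set PuncturedDisk := {z : PuncturedDisk | ‖(z : ℂ)‖ = 1}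

noncomputable def pdScale (z : PuncturedDisk) (t : unitInterval) : ℝ :=
  max ‖(z : ℂ)‖ (1 - (t : ℝ))

lemma pdScale_pos (z : PuncturedDisk) (t : unitInterval) : 0 < pdScale z t :=
  lt_max_of_lt_left z.2.1

lemma pdScale_le_one (z : PuncturedDisk) (t : unitInterval) : pdScale z t ≤ 1 :=
  max_le z.2.2 (by have := t.2.1; linarith)

lemma norm_le_pdScale (z : PuncturedDisk) (t : unitInterval) : ‖(z : ℂ)‖ ≤ pdScale z t :=
  le_max_left _ _

lemma pdScale_continuous : Continuous fun p : PuncturedDisk × unitInterval => pdScale p.1 p.2 := by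
  exact ((continuous_subtype_val.comp continuous_fst).norm).max
    (continuous_const.sub (continuous_subtype_val.comp continuous_snd))

noncomputable def pdArg (z : PuncturedDisk) (t : unitInterval) : PuncturedDisk :=
  ⟨(z : ℂ) / (pdScale z t : ℝ), by
    have hs := pdScale_pos z t
    constructor
    · rw [norm_div, Complex.norm_real, Real.norm_of_nonneg hs.le]
      exact div_pos z.2.1 hs
    · rw [norm_div, Complex.norm_real, Real.norm_of_nonneg hs.le]
      exact div_le_one_of_le₀ (norm_le_pdScale z t) hs.le⟩

lemma pdArg_coe (z : PuncturedDisk) (t : unitInterval) :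
    (pdArg z t : ℂ) = (z : ℂ) / (pdScale z t : ℝ) := rfl

lemma pdArg_continuous : Continuous fun p : PuncturedDisk × unitInterval => pdArg p.1 p.2 := by
  refine Continuous.subtype_mk ?_ _
  exact (continuous_subtype_val.comp continuous_fst).div
    (Complex.continuous_ofReal.comp pdScale_continuous)
    (fun p => Complex.ofReal_ne_zero.mpr (pdScale_pos p.1 p.2).ne')

noncomputable def pdH (φ : PuncturedDisk → PuncturedDisk)
    (p : PuncturedDisk × unitInterval) : PuncturedDisk :=
  ⟨(pdScale p.1 p.2 : ℝ) • (φ (pdArg p.1 p.2) : ℂ), by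
    have hs := pdScale_pos p.1 p.2
    have h2 := (φ (pdArg p.1 p.2)).2
    have key : ‖(pdScale p.1 p.2 : ℝ) • ((φ (pdArg p.1 p.2)) : ℂ)‖
        = pdScale p.1 p.2 * ‖((φ (pdArg p.1 p.2)) : ℂ)‖ := by
      rw [norm_smul, Real.norm_of_nonneg hs.le]
    refine ⟨?_, ?_⟩
    · rw [key]; exact mul_pos hs h2.1
    · rw [key]; exact mul_le_one₀ (pdScale_le_one p.1 p.2) (norm_nonneg _) h2.2⟩

lemma pdH_coe (φ : PuncturedDisk → PuncturedDisk) (p : PuncturedDisk × unitInterval) :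
    (pdH φ p : ℂ) = (pdScale p.1 p.2 : ℝ) • (φ (pdArg p.1 p.2) : ℂ) := rfl

lemma pdH_norm (φ : PuncturedDisk → PuncturedDisk) (p : PuncturedDisk × unitInterval) :
    ‖(pdH φ p : ℂ)‖ = pdScale p.1 p.2 * ‖(φ (pdArg p.1 p.2) : ℂ)‖ := by
  rw [pdH_coe, norm_smul, Real.norm_of_nonneg (pdScale_pos p.1 p.2).le]

lemma pdH_continuous {φ : PuncturedDisk → PuncturedDisk} (hφ : Continuous φ) :
    Continuous (pdH φ) := by
  refine Continuous.subtype_mk ?_ _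
  exact pdScale_continuous.smul
    (continuous_subtype_val.comp (hφ.comp pdArg_continuous))

lemma pdScale_zero (z : PuncturedDisk) : pdScale z 0 = 1 := by
  have h0 : ((0 : unitInterval) : ℝ) = 0 := rfl
  rw [pdScale, h0, sub_zero]
  exact max_eq_right z.2.2

lemma pdScale_one (z : PuncturedDisk) : pdScale z 1 = ‖(z : ℂ)‖ := by
  simp [pdScale, max_eq_left (norm_nonneg _)]

lemma pdScale_boundary (z : PuncturedDisk) (hz : ‖(z : ℂ)‖ = 1) (t : unitInterval) :
    pdScale z t = 1 := by
  rw [pdScale, hz]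
  exact max_eq_left (by have := t.2.1; linarith)

lemma pdH_of_scale_one {φ : PuncturedDisk → PuncturedDisk} {z : PuncturedDisk}
    {t : unitInterval} (h : pdScale z t = 1) : pdH φ (z, t) = φ z := by
  have harg : pdArg z t = z := by
    apply Subtype.ext
    rw [pdArg_coe]
    show (z : ℂ) / ((pdScale (z, t).1 (z, t).2 : ℝ) : ℂ) = z
    rw [h]; simp
  apply Subtype.ext
  rw [pdH_coe]
  show (pdScale z t : ℝ) • ((φ (pdArg z t)) : ℂ) = _
  rw [h, harg, one_smul]

noncomputable def pdPsi (φ : PuncturedDisk → PuncturedDisk) (z : PuncturedDisk) :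
    PuncturedDisk := pdH φ (z, 1)

noncomputable def pdRetr (z : PuncturedDisk) : PuncturedDiskBoundary :=
  ⟨pdArg z 1, by
    show ‖(pdArg z 1 : ℂ)‖ = 1
    rw [pdArg_coe, pdScale_one, norm_div, Complex.norm_real,
      Real.norm_of_nonneg (norm_nonneg _), div_self z.2.1.ne']⟩

lemma pdRetr_continuous : Continuous pdRetr := by
  refine Continuous.subtype_mk ?_ _
  exact pdArg_continuous.comp (continuous_id.prodMk continuous_const)

lemma pdPsi_coe (φ : PuncturedDisk → PuncturedDisk) (z : PuncturedDisk) :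
    (pdPsi φ z : ℂ) = (‖(z : ℂ)‖ : ℝ) • ((φ (pdRetr z).1) : ℂ) := by
  rw [pdPsi, pdH_coe]
  show (pdScale z 1 : ℝ) • ((φ (pdArg z 1)) : ℂ) = _
  rw [pdScale_one]; rfl

lemma pd_norm_smul_mem (a : ℝ) (ha : 0 < a) (ha1 : a ≤ 1) (u : PuncturedDisk)
    (hu : ‖(u : ℂ)‖ = 1) : a • (u : ℂ) ∈ PuncturedDisk := by
  have : ‖a • (u : ℂ)‖ = a := by
    rw [norm_smul, Real.norm_of_nonneg ha.le, hu, mul_one]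
  exact ⟨by rw [this]; exact ha, by rw [this]; exact ha1⟩

lemma pdRetr_smul {a : ℝ} (ha : 0 < a) {u : PuncturedDisk} (hu : ‖(u : ℂ)‖ = 1)
    {c : PuncturedDisk} (hc : (c : ℂ) = a • (u : ℂ)) :
    ‖(c : ℂ)‖ = a ∧ pdRetr c = ⟨u, hu⟩ := by
  have hn : ‖(c : ℂ)‖ = a := by
    rw [hc, norm_smul, Real.norm_of_nonneg ha.le, hu, mul_one]
  refine ⟨hn, ?_⟩
  apply Subtype.ext
  apply Subtype.ext
  show (pdArg c 1 : ℂ) = (u : ℂ)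
  rw [pdArg_coe, pdScale_one, hn, hc, Complex.real_smul, mul_div_cancel_left₀ _ (by exact_mod_cast ha.ne')]

noncomputable def pdChi (g : PuncturedDiskBoundary → PuncturedDiskBoundary)
    (z : PuncturedDisk) : PuncturedDisk :=
  ⟨‖(z : ℂ)‖ • (((g (pdRetr z)) : PuncturedDisk) : ℂ),
    pd_norm_smul_mem _ z.2.1 z.2.2 _ (g (pdRetr z)).2⟩

lemma pdChi_coe (g : PuncturedDiskBoundary → PuncturedDiskBoundary) (z : PuncturedDisk) :
    (pdChi g z : ℂ) = ‖(z : ℂ)‖ • (((g (pdRetr z)) : PuncturedDisk) : ℂ) := rfl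

lemma pdChi_continuous {g : PuncturedDiskBoundary → PuncturedDiskBoundary}
    (hg : Continuous g) : Continuous (pdChi g) := by
  refine Continuous.subtype_mk ?_ _
  exact (continuous_subtype_val.norm).smul
    (continuous_subtype_val.comp (continuous_subtype_val.comp (hg.comp pdRetr_continuous)))

lemma isCompact_pdAnnulus {a : ℝ} (ha : 0 < a) :
    IsCompact {z : PuncturedDisk | a ≤ ‖(z : ℂ)‖} := by
  rw [Subtype.isCompact_iff]
  have himg : (Subtype.val '' {z : PuncturedDisk | a ≤ ‖(z : ℂ)‖})
      = {w : ℂ | a ≤ ‖w‖ ∧ ‖w‖ ≤ 1} := by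
    ext w
    constructor
    · rintro ⟨z, hz, rfl⟩
      exact ⟨hz, z.2.2⟩
    · rintro ⟨h1, h2⟩
      exact ⟨⟨w, lt_of_lt_of_le ha h1, h2⟩, h1, rfl⟩
  rw [himg]
  apply IsCompact.of_isClosed_subset (isCompact_closedBall (0 : ℂ) 1)
  · exact (isClosed_le continuous_const continuous_norm).inter
      (isClosed_le continuous_norm continuous_const)
  · intro w hw
    simpa [Metric.mem_closedBall, dist_zero_right] using hw.2

lemma isCompact_pdBoundary : IsCompact PuncturedDiskBoundary := by
  rw [Subtype.isCompact_iff]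
  have himg : (Subtype.val '' PuncturedDiskBoundary) = Metric.sphere (0 : ℂ) 1 := by
    ext w
    constructor
    · rintro ⟨z, hz, rfl⟩
      exact mem_sphere_zero_iff_norm.mpr hz
    · intro hw
      rw [Metric.mem_sphere, dist_zero_right] at hw
      exact ⟨⟨w, by rw [hw]; norm_num, hw.le⟩, hw, rfl⟩
  rw [himg]
  exact isCompact_sphere 0 1

lemma pdArg_norm (z : PuncturedDisk) (t : unitInterval) :
    ‖(pdArg z t : ℂ)‖ = ‖(z : ℂ)‖ / pdScale z t := by
  rw [pdArg_coe, norm_div, Complex.norm_real, Real.norm_of_nonneg (pdScale_pos z t).le]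

/-- Proper rigidity of the punctured disk: a proper continuous self-map `φ` of the
punctured closed disk `D*` with `φ⁻¹(∂D*) = ∂D*` that restricts to a homeomorphism of the
boundary circle `∂D*` is properly homotopic, relative to `∂D*`, to a homeomorphism of `D*`. -/
theorem punctured_disk_proper_rigidity
    (φ : PuncturedDisk → PuncturedDisk) (hφ : IsProperMap φ)
    (hbd : φ ⁻¹' PuncturedDiskBoundary = PuncturedDiskBoundary)
    (hbij : Set.BijOn φ PuncturedDiskBoundary PuncturedDiskBoundary) :
    ∃ ψ : PuncturedDisk ≃ₜ PuncturedDisk,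
      ∃ H : PuncturedDisk × unitInterval → PuncturedDisk,
        IsProperMap H ∧ (∀ z, H (z, 0) = φ z) ∧ (∀ z, H (z, 1) = ψ z) ∧
        (∀ z ∈ PuncturedDiskBoundary, ∀ t, H (z, t) = φ z) := by
  classical
  have hmap : ∀ u : PuncturedDisk, u ∈ PuncturedDiskBoundary → φ u ∈ PuncturedDiskBoundary :=
    fun u hu => by rw [← hbd] at hu; exact hu
  haveI : CompactSpace PuncturedDiskBoundary :=
    isCompact_iff_compactSpace.mp isCompact_pdBoundary
  set f : PuncturedDiskBoundary → PuncturedDiskBoundary :=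
    fun u => ⟨φ u.1, hmap u.1 u.2⟩ with hf
  have hfbij : Function.Bijective f := by
    constructor
    · intro u v huv
      have : φ u.1 = φ v.1 := congrArg Subtype.val huv
      exact Subtype.ext (hbij.2.1 u.2 v.2 this)
    · intro v
      obtain ⟨u, hu, huv⟩ := hbij.2.2 v.2
      exact ⟨⟨u, hu⟩, Subtype.ext huv⟩
  have hfc : Continuous f :=
    Continuous.subtype_mk (hφ.continuous.comp continuous_subtype_val) _
  let e : PuncturedDiskBoundary ≃ₜ PuncturedDiskBoundary :=
    Continuous.homeoOfEquivCompactToT2 (f := Equiv.ofBijective f hfbij) hfc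
  have he_apply : ∀ u, e u = f u := fun u => rfl
  -- the homeomorphism ψ
  have left_inv : ∀ z, pdChi (⇑e.symm) (pdPsi φ z) = z := by
    intro z
    set u := pdRetr z with hu
    have hb : ‖((φ u.1 : PuncturedDisk) : ℂ)‖ = 1 := hmap u.1 u.2
    obtain ⟨hn, hr⟩ := pdRetr_smul z.2.1 hb (pdPsi_coe φ z)
    apply Subtype.ext
    rw [pdChi_coe, hn, hr]
    have h1 : e.symm ⟨φ u.1, hb⟩ = u := by
      have h2 : (⟨φ u.1, hb⟩ : PuncturedDiskBoundary) = e u := rfl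
      rw [h2]; exact e.symm_apply_apply u
    rw [h1]
    show ‖(z : ℂ)‖ • ((pdArg z 1 : ℂ)) = (z : ℂ)
    rw [pdArg_coe, pdScale_one, Complex.real_smul]
    have hz0 : ((‖(z : ℂ)‖ : ℝ) : ℂ) ≠ 0 := by
      exact_mod_cast z.2.1.ne'
    rw [mul_comm, div_mul_cancel₀ _ hz0]
  have right_inv : ∀ z, pdPsi φ (pdChi (⇑e.symm) z) = z := by
    intro z
    set u := pdRetr z with hu
    set v := e.symm u with hv
    have hb : ‖((v.1 : PuncturedDisk) : ℂ)‖ = 1 := v.2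
    obtain ⟨hn, hr⟩ := pdRetr_smul z.2.1 hb (pdChi_coe (⇑e.symm) z)
    apply Subtype.ext
    rw [pdPsi_coe, hn, hr]
    have h1 : φ ((⟨v.1, hb⟩ : PuncturedDiskBoundary) : PuncturedDisk) = u.1 := by
      have h2 : (⟨v.1, hb⟩ : PuncturedDiskBoundary) = v := Subtype.ext rfl
      rw [h2]
      have h3 : f v = u := by rw [hv]; exact e.apply_symm_apply u
      exact congrArg Subtype.val h3
    rw [h1]
    show ‖(z : ℂ)‖ • ((pdArg z 1 : ℂ)) = (z : ℂ)
    rw [pdArg_coe, pdScale_one, Complex.real_smul]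
    have hz0 : ((‖(z : ℂ)‖ : ℝ) : ℂ) ≠ 0 := by
      exact_mod_cast z.2.1.ne'
    rw [mul_comm, div_mul_cancel₀ _ hz0]
  let ψ : PuncturedDisk ≃ₜ PuncturedDisk :=
    { toFun := pdPsi φ
      invFun := pdChi (⇑e.symm)
      left_inv := left_inv
      right_inv := right_inv
      continuous_toFun :=
        (pdH_continuous hφ.continuous).comp (continuous_id.prodMk continuous_const)
      continuous_invFun := pdChi_continuous e.symm.continuous }
  refine ⟨ψ, pdH φ, ?_, fun z => pdH_of_scale_one (pdScale_zero z), fun z => rfl,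
    fun z hz t => pdH_of_scale_one (pdScale_boundary z hz t)⟩
  -- properness
  rw [isProperMap_iff_isCompact_preimage]
  refine ⟨pdH_continuous hφ.continuous, fun K hK => ?_⟩
  rcases K.eq_empty_or_nonempty with rfl | hne
  · simp
  obtain ⟨k0, hk0K, hk0min⟩ :=
    hK.exists_isMinOn hne (continuous_subtype_val.norm.continuousOn)
  set ε : ℝ := ‖(k0 : ℂ)‖ with hε
  have hεpos : 0 < ε := k0.2.1
  set P := φ ⁻¹' {z : PuncturedDisk | ε ≤ ‖(z : ℂ)‖} with hP
  have hPc : IsCompact P := hφ.isCompact_preimage (isCompact_pdAnnulus hεpos)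
  obtain ⟨δ, hδpos, hδ⟩ : ∃ δ > 0, ∀ w ∈ P, δ ≤ ‖(w : ℂ)‖ := by
    rcases P.eq_empty_or_nonempty with hPe | hPne
    · exact ⟨1, one_pos, fun w hw => by rw [hPe] at hw; exact absurd hw (Set.notMem_empty w)⟩
    · obtain ⟨w0, hw0P, hw0⟩ := hPc.exists_isMinOn hPne (continuous_subtype_val.norm.continuousOn)
      exact ⟨‖(w0 : ℂ)‖, w0.2.1, fun w hw => hw0 hw⟩
  apply IsCompact.of_isClosed_subset
    ((isCompact_pdAnnulus (mul_pos hδpos hεpos)).prod isCompact_univ)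
    (hK.isClosed.preimage (pdH_continuous hφ.continuous))
  rintro ⟨z, t⟩ hzt
  have hzt' : pdH φ (z, t) ∈ K := hzt
  have hεle : ε ≤ ‖(pdH φ (z, t) : ℂ)‖ := hk0min hzt'
  have hnorm : ‖(pdH φ (z, t) : ℂ)‖ = pdScale z t * ‖((φ (pdArg z t)) : ℂ)‖ :=
    pdH_norm φ (z, t)
  set s := pdScale z t with hs
  set w := pdArg z t with hw
  have hspos : 0 < s := pdScale_pos z t
  have hsle : s ≤ 1 := pdScale_le_one z t
  have hφw1 : ‖((φ w) : ℂ)‖ ≤ 1 := (φ w).2.2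
  have hφwε : ε ≤ ‖((φ w) : ℂ)‖ := by
    calc ε ≤ s * ‖((φ w) : ℂ)‖ := hnorm ▸ hεle
    _ ≤ 1 * ‖((φ w) : ℂ)‖ := by
        exact mul_le_mul_of_nonneg_right hsle (norm_nonneg _)
    _ = ‖((φ w) : ℂ)‖ := one_mul _
  have hsε : ε ≤ s := by
    calc ε ≤ s * ‖((φ w) : ℂ)‖ := hnorm ▸ hεle
    _ ≤ s * 1 := mul_le_mul_of_nonneg_left hφw1 hspos.le
    _ = s := mul_one _
  have hwP : w ∈ P := hφwε
  have hδw : δ ≤ ‖(w : ℂ)‖ := hδ w hwP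
  have hwn : ‖(w : ℂ)‖ = ‖(z : ℂ)‖ / s := pdArg_norm z t
  refine ⟨?_, Set.mem_univ t⟩
  show δ * ε ≤ ‖(z : ℂ)‖
  have h1 : δ * s ≤ ‖(z : ℂ)‖ := by
    rw [hwn] at hδw
    calc δ * s ≤ (‖(z : ℂ)‖ / s) * s := mul_le_mul_of_nonneg_right hδw hspos.le
    _ = ‖(z : ℂ)‖ := div_mul_cancel₀ _ hspos.ne'
  calc δ * ε ≤ δ * s := mul_le_mul_of_nonneg_left hsε hδpos.le
  _ ≤ ‖(z : ℂ)‖ := h1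
end

section
/- The explicit homotopy H : D* × [0,1] → D* defined by H(z,t) = (1−t)·φ(z/(1−t)) if 0 < |z| ≤ 1−t, and H(z,t) = |z|·φ(z/|z|) if 1−t < |z| ≤ 1, where D* = {z ∈ ℂ : 0 < |z| ≤ 1} and φ : D* → D* is a proper continuous map with φ⁻¹(∂D*) = ∂D*, is a proper map: for any sequence (zₙ, tₙ) in D* × [0,1] with zₙ → 0, we have H(zₙ, tₙ) → 0. -/
open Filter Topology

/-- The Alexander-trick homotopy `H(z,t) = (1−t)·φ(z/(1−t))` for `0 < |z| ≤ 1−t` and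
`H(z,t) = |z|·φ(z/|z|)` for `1−t < |z| ≤ 1`. -/
noncomputable def alexanderH (φ : PuncturedDisk → PuncturedDisk)
    (z : PuncturedDisk) (t : unitInterval) : ℂ :=
  if h : ‖(z : ℂ)‖ ≤ 1 - (t : ℝ) then
    (((1 - (t : ℝ)) : ℝ) : ℂ) * (φ ⟨(z : ℂ) / ((((1 - (t : ℝ)) : ℝ)) : ℂ), by
      have h0 : (0 : ℝ) < 1 - (t : ℝ) := lt_of_lt_of_le z.2.1 h
      have hn : ‖(z : ℂ) / ((((1 - (t : ℝ)) : ℝ)) : ℂ)‖ = ‖(z : ℂ)‖ / (1 - (t : ℝ)) := by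
        rw [norm_div, Complex.norm_real, Real.norm_eq_abs, abs_of_pos h0]
      exact ⟨by rw [hn]; exact div_pos z.2.1 h0,
        by rw [hn]; exact (div_le_one h0).mpr h⟩⟩ : ℂ)
  else
    ((‖(z : ℂ)‖ : ℝ) : ℂ) * (φ ⟨(z : ℂ) / ((‖(z : ℂ)‖ : ℝ) : ℂ), by
      have h0 : (0 : ℝ) < ‖(z : ℂ)‖ := z.2.1
      have hn : ‖(z : ℂ) / ((‖(z : ℂ)‖ : ℝ) : ℂ)‖ = 1 := by
        rw [norm_div, Complex.norm_real, Real.norm_eq_abs, abs_of_pos h0, div_self h0.ne']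
      exact ⟨by rw [hn]; norm_num, le_of_eq hn⟩⟩ : ℂ)

lemma small_of_proper (φ : PuncturedDisk → PuncturedDisk) (hφ : IsProperMap φ)
    {ε : ℝ} (hε : 0 < ε) :
    ∃ δ > 0, ∀ w : PuncturedDisk, ‖(w : ℂ)‖ < δ → ‖((φ w : PuncturedDisk) : ℂ)‖ < ε := by
  set K : Set PuncturedDisk := {v | ε ≤ ‖(v : ℂ)‖} with hKdef
  have hK : IsCompact K := by
    rw [Subtype.isCompact_iff]
    have himg : Subtype.val '' K = Metric.closedBall (0 : ℂ) 1 ∩ (Metric.ball (0 : ℂ) ε)ᶜ := by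
      ext z
      simp only [Set.mem_image, Set.mem_inter_iff, Metric.mem_closedBall, Metric.mem_ball,
        Set.mem_compl_iff, dist_zero_right, not_lt, hKdef, Set.mem_setOf_eq]
      constructor
      · rintro ⟨⟨w, hw⟩, hwK, rfl⟩
        exact ⟨hw.2, hwK⟩
      · rintro ⟨h1, h2⟩
        exact ⟨⟨z, hε.trans_le h2, h1⟩, h2, rfl⟩
    rw [himg]
    exact (isCompact_closedBall 0 1).inter_right (Metric.isOpen_ball.isClosed_compl)
  have hC : IsCompact (φ ⁻¹' K) := hφ.isCompact_preimage hK
  rcases (φ ⁻¹' K).eq_empty_or_nonempty with he | hne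
  · refine ⟨1, one_pos, fun w _ => ?_⟩
    by_contra h
    have : w ∈ φ ⁻¹' K := le_of_not_gt h
    simp [he] at this
  · obtain ⟨w₀, hw₀, hmin⟩ := hC.exists_isMinOn hne
      ((continuous_norm.comp continuous_subtype_val).continuousOn)
    refine ⟨‖(w₀ : ℂ)‖, w₀.2.1, fun w hw => ?_⟩
    by_contra h
    exact absurd (hmin (le_of_not_gt h : w ∈ φ ⁻¹' K)) (not_le.mpr hw)

/-- The explicit Alexander homotopy is proper: if `φ : D* → D*` is a proper continuous map
with `φ⁻¹(∂D*) = ∂D*`, then for any sequence `(zₙ, tₙ)` in `D* × [0,1]` with `zₙ → 0` we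
have `H(zₙ, tₙ) → 0`. -/
theorem alexanderH_isProper
    (φ : PuncturedDisk → PuncturedDisk) (hφ : IsProperMap φ)
    (hbd : φ ⁻¹' {z : PuncturedDisk | ‖(z : ℂ)‖ = 1} = {z : PuncturedDisk | ‖(z : ℂ)‖ = 1})
    (zs : ℕ → PuncturedDisk) (ts : ℕ → unitInterval)
    (hzs : Tendsto (fun n => ((zs n : ℂ))) atTop (𝓝 0)) :
    Tendsto (fun n => alexanderH φ (zs n) (ts n)) atTop (𝓝 0) := by
  rw [NormedAddCommGroup.tendsto_nhds_zero]
  intro ε hε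
  obtain ⟨δ, hδ, hsm⟩ := small_of_proper φ hφ hε
  have hev : ∀ᶠ n in atTop, ‖((zs n : ℂ))‖ < min ε (δ * ε) := by
    have := (NormedAddCommGroup.tendsto_nhds_zero.mp hzs) (min ε (δ * ε))
      (lt_min hε (mul_pos hδ hε))
    exact this
  filter_upwards [hev] with n hn
  unfold alexanderH
  split_ifs with h
  · set t := (ts n : ℝ)
    have h0 : (0 : ℝ) < 1 - t := lt_of_lt_of_le (zs n).2.1 h
    rw [norm_mul, Complex.norm_real, Real.norm_eq_abs, abs_of_pos h0]
    set w : PuncturedDisk := ⟨(zs n : ℂ) / (((1 - t : ℝ)) : ℂ), _⟩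
    by_cases hte : 1 - t < ε
    · calc (1 - t) * ‖((φ w : PuncturedDisk) : ℂ)‖
          ≤ (1 - t) * 1 := by
            exact mul_le_mul_of_nonneg_left (φ w).2.2 h0.le
        _ < ε := by linarith
    · push_neg at hte
      have hwn : ‖(w : ℂ)‖ = ‖(zs n : ℂ)‖ / (1 - t) := by
        show ‖(zs n : ℂ) / (((1 - t : ℝ)) : ℂ)‖ = _
        rw [norm_div, Complex.norm_real, Real.norm_eq_abs, abs_of_pos h0]
      have hws : ‖(w : ℂ)‖ < δ := by
        rw [hwn]
        rw [div_lt_iff₀ h0]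
        calc ‖(zs n : ℂ)‖ < δ * ε := lt_of_lt_of_le hn (min_le_right _ _)
          _ ≤ δ * (1 - t) := by
            exact mul_le_mul_of_nonneg_left hte hδ.le
      have := hsm w hws
      calc (1 - t) * ‖((φ w : PuncturedDisk) : ℂ)‖
          ≤ 1 * ‖((φ w : PuncturedDisk) : ℂ)‖ := by
            apply mul_le_mul_of_nonneg_right _ (norm_nonneg _)
            have := (ts n).2.1; linarith
        _ < ε := by rw [one_mul]; exact this
  · rw [norm_mul, Complex.norm_real, Real.norm_eq_abs, abs_of_pos (zs n).2.1]
    calc ‖(zs n : ℂ)‖ * ‖_‖ ≤ ‖(zs n : ℂ)‖ * 1 :=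
        mul_le_mul_of_nonneg_left (φ _).2.2 (norm_nonneg _)
      _ < ε := by rw [mul_one]; exact lt_of_lt_of_le hn (min_le_left _ _)
end
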